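/- Let η > 0, δ > 0, d > 0, let C < P be nonnegative integers, and let v ∈ ℝ. Define g : [Pδ, ∞) → ℝ by g(τ) = v · min(τ − Pδ, δ). Then ∫_{Cδ}^{(C+1)δ} e^{η(δ−τ)} (d/2) dτ + ∫_{Pδ}^∞ e^{η(δ−τ)} g(τ) dτ = ((1 − e^{−ηδ}) e^{η(δ − Cδ)} / η) · (d/2 + (v/η) e^{−η(P−C)δ}). Consequently, the left-hand side is nonnegative if and only if (e^{−η(Pδ−Cδ)}/η)·v + d/2 ≥ 0; in particular, if |v| ≤ v_max for some v_max > 0 and Pδ ≥ Cδ + (1/η)·log(2 v_max/(η d)), then the left-hand side is nonnegative. -/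

import Mathlib

open MeasureTheory Real intervalIntegral

-- auxiliary lemmas

lemma aux_exp_tendsto (η δ : ℝ) (hη : 0 < η) :
    Filter.Tendsto (fun τ : ℝ => Real.exp (η * (δ - τ))) Filter.atTop (nhds 0) := by
  apply Real.tendsto_exp_atBot.comp
  have h1 : Filter.Tendsto (fun τ : ℝ => -η * τ) Filter.atTop Filter.atBot := by
    exact Filter.Tendsto.const_mul_atTop_of_neg (neg_neg_iff_pos.mpr hη) Filter.tendsto_id
  have h2 : Filter.Tendsto (fun τ : ℝ => η * δ + -η * τ) Filter.atTop Filter.atBot :=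
    Filter.tendsto_atBot_add_const_left _ _ h1
  convert h2 using 2 with τ
  ring

lemma aux_tail (η δ a k : ℝ) (hη : 0 < η) :
    ∫ τ in Set.Ioi a, Real.exp (η * (δ - τ)) * k = k / η * Real.exp (η * (δ - a)) := by
  have hderiv : ∀ x ∈ Set.Ioi a,
      HasDerivAt (fun τ => -(k / η) * Real.exp (η * (δ - τ))) (Real.exp (η * (δ - x)) * k) x := by
    intro x _
    have h1 : HasDerivAt (fun τ : ℝ => η * (δ - τ)) (η * (-1)) x :=
      ((hasDerivAt_id x).const_sub δ).const_mul η
    have h2 := (h1.exp).const_mul (-(k / η))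
    refine h2.congr_deriv ?_
    field_simp
  have hint : IntegrableOn (fun τ => Real.exp (η * (δ - τ)) * k) (Set.Ioi a) := by
    have : IntegrableOn (fun τ : ℝ => Real.exp (-η * τ)) (Set.Ioi a) :=
      exp_neg_integrableOn_Ioi a hη
    have h2 : IntegrableOn (fun x : ℝ => Real.exp (η * δ) * k * Real.exp (-η * x))
        (Set.Ioi a) := this.const_mul _
    apply h2.congr_fun _ measurableSet_Ioi
    intro x _
    have hxe : Real.exp (η * (δ - x)) = Real.exp (η * δ) * Real.exp (-η * x) := by
      rw [← Real.exp_add]; ring_nf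
    simp only [hxe]
    ring
  have htend : Filter.Tendsto (fun τ => -(k / η) * Real.exp (η * (δ - τ))) Filter.atTop
      (nhds 0) := by
    have := (aux_exp_tendsto η δ hη).const_mul (-(k / η))
    simpa using this
  have hcont : ContinuousWithinAt (fun τ => -(k / η) * Real.exp (η * (δ - τ))) (Set.Ici a) a := by
    exact (continuous_const.mul (Real.continuous_exp.comp (continuous_const.mul (continuous_const.sub continuous_id)))).continuousWithinAt
  rw [integral_Ioi_of_hasDerivAt_of_tendsto hcont hderiv hint htend]
  ring

set_option maxHeartbeats 1000000 in
theorem stmt_17 (η δ d v : ℝ) (hη : 0 < η) (hδ : 0 < δ) (hd : 0 < d)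
    (C P : ℕ) (hCP : C < P)
    (L : ℝ)
    (hL : L = (∫ τ in ((C : ℝ) * δ)..(((C : ℝ) + 1) * δ), Real.exp (η * (δ - τ)) * (d / 2))
        + ∫ τ in Set.Ioi ((P : ℝ) * δ),
            Real.exp (η * (δ - τ)) * (v * min (τ - (P : ℝ) * δ) δ)) :
    L = (1 - Real.exp (-η * δ)) * Real.exp (η * (δ - (C : ℝ) * δ)) / η *
        (d / 2 + v / η * Real.exp (-η * ((P : ℝ) - (C : ℝ)) * δ)) ∧
    (0 ≤ L ↔ 0 ≤ Real.exp (-η * ((P : ℝ) * δ - (C : ℝ) * δ)) / η * v + d / 2) ∧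
    (∀ vmax : ℝ, 0 < vmax → |v| ≤ vmax →
      (C : ℝ) * δ + 1 / η * Real.log (2 * vmax / (η * d)) ≤ (P : ℝ) * δ → 0 ≤ L) := by
  have hηne : η ≠ 0 := hη.ne'
  set b : ℝ := (P : ℝ) * δ with hbdef
  -- First integral
  have hI1 : (∫ τ in ((C : ℝ) * δ)..(((C : ℝ) + 1) * δ), Real.exp (η * (δ - τ)) * (d / 2))
      = d / 2 / η * (Real.exp (η * (δ - (C : ℝ) * δ)) - Real.exp (-(η * ((C : ℝ) * δ)))) := by
    have hderiv : ∀ τ ∈ Set.uIcc ((C : ℝ) * δ) (((C : ℝ) + 1) * δ),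
        HasDerivAt (fun τ => -(d / 2 / η) * Real.exp (η * (δ - τ)))
          (Real.exp (η * (δ - τ)) * (d / 2)) τ := by
      intro x _
      have h1 : HasDerivAt (fun τ : ℝ => η * (δ - τ)) (η * (-1)) x :=
        ((hasDerivAt_id x).const_sub δ).const_mul η
      have h2 := (h1.exp).const_mul (-(d / 2 / η))
      refine h2.congr_deriv ?_
      field_simp
    rw [intervalIntegral.integral_eq_sub_of_hasDerivAt hderiv
      ((Continuous.mul (Real.continuous_exp.comp (continuous_const.mul (continuous_const.sub continuous_id))) continuous_const).intervalIntegrable _ _)]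
    rw [show η * (δ - ((C : ℝ) + 1) * δ) = -(η * ((C : ℝ) * δ)) by ring]
    ring
  -- Second integral: split at b + δ
  have hsplit : Set.Ioi b = Set.Ioc b (b + δ) ∪ Set.Ioi (b + δ) :=
    (Set.Ioc_union_Ioi_eq_Ioi (by linarith)).symm
  have hcontf : Continuous (fun τ => Real.exp (η * (δ - τ)) * (v * min (τ - b) δ)) := by
    apply Continuous.mul (Real.continuous_exp.comp (continuous_const.mul (continuous_const.sub continuous_id)))
    exact continuous_const.mul ((continuous_id.sub continuous_const).min continuous_const)
  have hint1 : IntegrableOn (fun τ => Real.exp (η * (δ - τ)) * (v * min (τ - b) δ))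
      (Set.Ioc b (b + δ)) := hcontf.integrableOn_Ioc
  have hint2 : IntegrableOn (fun τ => Real.exp (η * (δ - τ)) * (v * min (τ - b) δ))
      (Set.Ioi (b + δ)) := by
    have h0 : IntegrableOn (fun τ : ℝ => Real.exp (-η * τ)) (Set.Ioi (b + δ)) :=
      exp_neg_integrableOn_Ioi _ hη
    have h2 : IntegrableOn (fun x : ℝ => Real.exp (η * δ) * (v * δ) * Real.exp (-η * x))
        (Set.Ioi (b + δ)) := h0.const_mul _
    apply h2.congr_fun _ measurableSet_Ioi
    intro x hx
    have hxe : Real.exp (η * (δ - x)) = Real.exp (η * δ) * Real.exp (-η * x) := by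
      rw [← Real.exp_add]; ring_nf
    simp only [min_eq_right (show (x : ℝ) - b ≥ δ from by
      simp only [Set.mem_Ioi] at hx; linarith), hxe]
    ring
  have hI2 : (∫ τ in Set.Ioi b, Real.exp (η * (δ - τ)) * (v * min (τ - b) δ))
      = v / η ^ 2 * (Real.exp (η * (δ - b)) - Real.exp (η * (δ - (b + δ)))) := by
    rw [hsplit, MeasureTheory.setIntegral_union (Set.Ioc_disjoint_Ioi le_rfl)
      measurableSet_Ioi hint1 hint2]
    have hA : (∫ τ in Set.Ioc b (b + δ), Real.exp (η * (δ - τ)) * (v * min (τ - b) δ))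
        = (∫ τ in b..(b + δ), Real.exp (η * (δ - τ)) * (v * (τ - b))) := by
      rw [intervalIntegral.integral_of_le (by linarith)]
      apply MeasureTheory.setIntegral_congr_fun measurableSet_Ioc
      intro x hx
      simp only [min_eq_left (show (x : ℝ) - b ≤ δ from by
        simp only [Set.mem_Ioc] at hx; linarith)]
    have hAval : (∫ τ in b..(b + δ), Real.exp (η * (δ - τ)) * (v * (τ - b)))
        = (-Real.exp (η * (δ - (b + δ))) * (v * (δ / η + 1 / η ^ 2)))
          - (-Real.exp (η * (δ - b)) * (v * (1 / η ^ 2))) := by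
      have hderiv : ∀ x ∈ Set.uIcc b (b + δ),
          HasDerivAt (fun τ => -Real.exp (η * (δ - τ)) * (v * ((τ - b) / η + 1 / η ^ 2)))
            (Real.exp (η * (δ - x)) * (v * (x - b))) x := by
        intro x _
        have h1 : HasDerivAt (fun τ : ℝ => η * (δ - τ)) (η * (-1)) x :=
          ((hasDerivAt_id x).const_sub δ).const_mul η
        have h2 : HasDerivAt (fun τ : ℝ => -Real.exp (η * (δ - τ)))
            (-(Real.exp (η * (δ - x)) * (η * (-1)))) x := (h1.exp).neg
        have h3 : HasDerivAt (fun τ : ℝ => v * ((τ - b) / η + 1 / η ^ 2)) (v * (1 / η)) x := by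
          have := (((hasDerivAt_id x).sub_const b).div_const η).add_const (1 / η ^ 2)
          exact this.const_mul v
        have h4 := h2.mul h3
        refine h4.congr_deriv ?_
        field_simp
        ring
      rw [intervalIntegral.integral_eq_sub_of_hasDerivAt hderiv
        ((Continuous.mul (Real.continuous_exp.comp (continuous_const.mul (continuous_const.sub continuous_id)))
          (continuous_const.mul (continuous_id.sub continuous_const))).intervalIntegrable _ _)]
      rw [show b + δ - b = δ by ring]
      ring
    have hB : (∫ τ in Set.Ioi (b + δ), Real.exp (η * (δ - τ)) * (v * min (τ - b) δ))
        = v * δ / η * Real.exp (η * (δ - (b + δ))) := by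
      have := aux_tail η δ (b + δ) (v * δ) hη
      rw [← this]
      apply MeasureTheory.setIntegral_congr_fun measurableSet_Ioi
      intro x hx
      simp only [min_eq_right (show (δ:ℝ) ≤ x - b from by
        simp only [Set.mem_Ioi] at hx; linarith)]
    rw [hA, hAval, hB]
    field_simp
    ring
  -- exp identities
  have hexp1 : Real.exp (η * (δ - b)) =
      Real.exp (η * (δ - (C : ℝ) * δ)) * Real.exp (-η * ((P : ℝ) - (C : ℝ)) * δ) := by
    rw [← Real.exp_add]; congr 1; rw [hbdef]; ring
  have hexp2 : Real.exp (η * (δ - (b + δ))) =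
      Real.exp (-(η * ((C : ℝ) * δ))) * Real.exp (-η * ((P : ℝ) - (C : ℝ)) * δ) := by
    rw [← Real.exp_add]; congr 1; rw [hbdef]; ring
  have hexp3 : Real.exp (-(η * ((C : ℝ) * δ))) =
      Real.exp (-η * δ) * Real.exp (η * (δ - (C : ℝ) * δ)) := by
    rw [← Real.exp_add]; congr 1; ring
  have hmain : L = (1 - Real.exp (-η * δ)) * Real.exp (η * (δ - (C : ℝ) * δ)) / η *
      (d / 2 + v / η * Real.exp (-η * ((P : ℝ) - (C : ℝ)) * δ)) := by
    rw [hL, hI1, hI2, hexp1, hexp2, hexp3]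
    field_simp
  refine ⟨hmain, ?_, ?_⟩
  · -- positivity equivalence
    have hK : 0 < (1 - Real.exp (-η * δ)) * Real.exp (η * (δ - (C : ℝ) * δ)) / η := by
      apply div_pos _ hη
      apply mul_pos _ (Real.exp_pos _)
      have : Real.exp (-η * δ) < 1 := by
        rw [Real.exp_lt_one_iff]
        nlinarith
      linarith
    have hee : Real.exp (-η * ((P : ℝ) * δ - (C : ℝ) * δ)) =
        Real.exp (-η * ((P : ℝ) - (C : ℝ)) * δ) := by congr 1; ring
    have hcomm : Real.exp (-η * ((P : ℝ) - (C : ℝ)) * δ) / η * v + d / 2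
        = d / 2 + v / η * Real.exp (-η * ((P : ℝ) - (C : ℝ)) * δ) := by ring
    rw [hmain, hee, hcomm]
    set K := (1 - Real.exp (-η * δ)) * Real.exp (η * (δ - (C : ℝ) * δ)) / η with hKdef
    set x := d / 2 + v / η * Real.exp (-η * ((P : ℝ) - (C : ℝ)) * δ) with hxdef
    constructor
    · intro h
      nlinarith [hK, h]
    · intro h
      exact mul_nonneg hK.le h
  · -- sufficient condition
    intro vmax hvmax hv hP
    rw [hmain]
    have hK : 0 ≤ (1 - Real.exp (-η * δ)) * Real.exp (η * (δ - (C : ℝ) * δ)) / η := by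
      apply div_nonneg _ hη.le
      apply mul_nonneg _ (Real.exp_pos _).le
      have : Real.exp (-η * δ) ≤ 1 := by
        rw [Real.exp_le_one_iff]
        nlinarith
      linarith
    apply mul_nonneg hK
    -- show d/2 + v/η * exp(...) ≥ 0
    have hx : (0 : ℝ) < 2 * vmax / (η * d) := by positivity
    have hlog : Real.log (2 * vmax / (η * d)) ≤ η * ((P : ℝ) - (C : ℝ)) * δ := by
      have hPC : ((P : ℝ) - (C : ℝ)) * δ = (P : ℝ) * δ - (C : ℝ) * δ := by ring
      have h1 : 1 / η * Real.log (2 * vmax / (η * d)) ≤ ((P : ℝ) - (C : ℝ)) * δ := by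
        rw [hPC]; linarith
      have h2 := mul_le_mul_of_nonneg_left h1 hη.le
      have h3 : η * (1 / η * Real.log (2 * vmax / (η * d)))
          = Real.log (2 * vmax / (η * d)) := by field_simp
      rw [h3] at h2
      linarith
    have hexp_le : Real.exp (-η * ((P : ℝ) - (C : ℝ)) * δ) ≤ η * d / (2 * vmax) := by
      have : Real.exp (-η * ((P : ℝ) - (C : ℝ)) * δ) ≤ Real.exp (-Real.log (2 * vmax / (η * d))) := by
        apply Real.exp_le_exp.mpr
        linarith
      rw [Real.exp_neg, Real.exp_log hx] at this
      rw [inv_div] at this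
      exact this
    have hbound : |v / η * Real.exp (-η * ((P : ℝ) - (C : ℝ)) * δ)| ≤ d / 2 := by
      rw [abs_mul, abs_div, abs_of_pos hη, abs_of_pos (Real.exp_pos _)]
      have h1 : |v| / η * Real.exp (-η * ((P : ℝ) - (C : ℝ)) * δ)
          ≤ vmax / η * (η * d / (2 * vmax)) := by
        apply mul_le_mul (by gcongr) hexp_le (Real.exp_pos _).le (by positivity)
      calc |v| / η * Real.exp (-η * ((P : ℝ) - (C : ℝ)) * δ) ≤ vmax / η * (η * d / (2 * vmax)) := h1
        _ = d / 2 := by field_simp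
    have := abs_le.mp hbound
    linarith [this.1]
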